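/- Let A be a finite abelian group and φ : A → ℂ a function with |φ(x)| = 1 for all x such that Δ_{t₁,…,t_{k+1}} φ(x) = 1 for all t₁,…,t_{k+1}, x ∈ A (a pure character of degree k). Then the function (t₁,…,t_k) ↦ Δ_{t₁,…,t_k} φ(x) is independent of x, and as a function of (t₁,…,t_k) it is a homomorphism in each variable separately (i.e. multilinear: for fixed t₂,…,t_k, the map t₁ ↦ Δ_{t₁,…,t_k}φ(0) is a group homomorphism from A to the unit circle). -/

import Mathlib

/-- The multiplicative difference operator `Δ_t f(x) = f(x+t) conj(f(x))`. -/
noncomputable def mDiff {A : Type*} [AddCommGroup A] (t : A) (f : A → ℂ) : A → ℂ :=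
  fun x => f (x + t) * (starRingEnd ℂ) (f x)

/-- Iterated multiplicative difference `Δ_{t₁,…,t_k} f`. -/
noncomputable def mDiffList {A : Type*} [AddCommGroup A] : List A → (A → ℂ) → A → ℂ
  | [], f => f
  | t :: ts, f => mDiffList ts (mDiff t f)

lemma conj_mul_self_of_abs {z : ℂ} (h : ‖z‖ = 1) : z * (starRingEnd ℂ) z = 1 := by
  rw [Complex.mul_conj, ← Complex.sq_norm, h]
  norm_num

lemma mDiffList_append {A : Type*} [AddCommGroup A] (l l' : List A) (f : A → ℂ) :
    mDiffList (l ++ l') f = mDiffList l' (mDiffList l f) := by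
  induction l generalizing f with
  | nil => rfl
  | cons t ts ih => simp [mDiffList, ih]

lemma mDiff_mul {A : Type*} [AddCommGroup A] (t : A) (f g : A → ℂ) :
    mDiff t (fun x => f x * g x) = fun x => mDiff t f x * mDiff t g x := by
  funext x
  simp only [mDiff, map_mul]
  ring

lemma mDiffList_mul {A : Type*} [AddCommGroup A] (l : List A) (f g : A → ℂ) :
    mDiffList l (fun x => f x * g x) = fun x => mDiffList l f x * mDiffList l g x := by
  induction l generalizing f g with
  | nil => rfl
  | cons t ts ih => simp [mDiffList, mDiff_mul, ih]

lemma mDiffList_abs {A : Type*} [AddCommGroup A] (l : List A) (f : A → ℂ)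
    (hf : ∀ x, ‖f x‖ = 1) : ∀ x, ‖mDiffList l f x‖ = 1 := by
  induction l generalizing f with
  | nil => exact hf
  | cons t ts ih =>
    exact ih _ (fun x => by simp [mDiff, norm_mul, Complex.norm_conj, hf])

lemma mDiff_add {A : Type*} [AddCommGroup A] (φ : A → ℂ)
    (hunit : ∀ x, ‖φ x‖ = 1) (a b : A) :
    mDiff (a + b) φ = fun x => mDiff a φ x * mDiff b φ x * mDiff b (mDiff a φ) x := by
  funext x
  have h1 := conj_mul_self_of_abs (hunit (x + a))
  have h2 := conj_mul_self_of_abs (hunit (x + b))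
  have h3 := conj_mul_self_of_abs (hunit x)
  simp only [mDiff, map_mul, Complex.conj_conj]
  have harg : x + b + a = x + (a + b) := by abel
  rw [harg]
  calc φ (x + (a + b)) * (starRingEnd ℂ) (φ x)
      = (φ (x + (a + b)) * (starRingEnd ℂ) (φ x)) *
        ((φ (x + a) * (starRingEnd ℂ) (φ (x + a))) *
          ((φ (x + b) * (starRingEnd ℂ) (φ (x + b))) *
            (φ x * (starRingEnd ℂ) (φ x)))) := by rw [h1, h2, h3]; ring
    _ = φ (x + a) * (starRingEnd ℂ) (φ x) * (φ (x + b) * (starRingEnd ℂ) (φ x)) *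
        (φ (x + (a + b)) * (starRingEnd ℂ) (φ (x + b)) *
          ((starRingEnd ℂ) (φ (x + a)) * φ x)) := by ring

lemma ofFn_cons {n : ℕ} {A : Type*} (a : A) (rest : Fin n → A) :
    List.ofFn (Fin.cons a rest) = a :: List.ofFn rest := by
  simp [List.ofFn_succ]

theorem stmt16 {A : Type*} [AddCommGroup A] (m : ℕ) (φ : A → ℂ)
    (hunit : ∀ x, ‖φ x‖ = 1)
    (hpure : ∀ (t : Fin (m + 2) → A) (x : A), mDiffList (List.ofFn t) φ x = 1) :
    (∀ (t : Fin (m + 1) → A) (x y : A),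
        mDiffList (List.ofFn t) φ x = mDiffList (List.ofFn t) φ y) ∧
      (∀ t : Fin (m + 1) → A, ‖mDiffList (List.ofFn t) φ 0‖ = 1) ∧
      ∀ (rest : Fin m → A) (a b : A),
        mDiffList (List.ofFn (Fin.cons (a + b) rest)) φ 0 =
          mDiffList (List.ofFn (Fin.cons a rest)) φ 0 *
            mDiffList (List.ofFn (Fin.cons b rest)) φ 0 := by
  refine ⟨?_, ?_, ?_⟩
  · -- constancy
    intro t x y
    set g := mDiffList (List.ofFn t) φ with hg
    have habs : ∀ x, ‖g x‖ = 1 := mDiffList_abs _ _ hunit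
    have hstep : ∀ s x, g (x + s) = g x := by
      intro s x
      have h := hpure (Fin.snoc t s) x
      have hofn : List.ofFn (Fin.snoc t s) = List.ofFn t ++ [s] := by
        rw [List.ofFn_succ']
        simp [List.concat_eq_append]
      rw [hofn, mDiffList_append] at h
      have h' : g (x + s) * (starRingEnd ℂ) (g x) = 1 := h
      have hx := conj_mul_self_of_abs (habs x)
      calc g (x + s) = g (x + s) * ((starRingEnd ℂ) (g x) * g x) := by
            rw [mul_comm ((starRingEnd ℂ) (g x)), hx, mul_one]
        _ = (g (x + s) * (starRingEnd ℂ) (g x)) * g x := by ring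
        _ = g x := by rw [h', one_mul]
    have hx : y + (x - y) = x := by abel
    rw [← hx, hstep]
  · -- unit modulus
    intro t
    exact mDiffList_abs _ _ hunit 0
  · -- multilinearity
    intro rest a b
    have hcross : mDiffList (List.ofFn rest) (mDiff b (mDiff a φ)) 0 = 1 := by
      have h := hpure (Fin.cons a (Fin.cons b rest)) 0
      rwa [ofFn_cons, ofFn_cons] at h
    rw [ofFn_cons, ofFn_cons, ofFn_cons]
    show mDiffList (List.ofFn rest) (mDiff (a + b) φ) 0 =
      mDiffList (List.ofFn rest) (mDiff a φ) 0 * mDiffList (List.ofFn rest) (mDiff b φ) 0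
    rw [mDiff_add φ hunit a b]
    rw [show (fun x => mDiff a φ x * mDiff b φ x * mDiff b (mDiff a φ) x) =
      (fun x => (fun y => mDiff a φ y * mDiff b φ y) x * (mDiff b (mDiff a φ)) x) from rfl]
    rw [mDiffList_mul, mDiffList_mul]
    simp [hcross]
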